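/- For every β ≥ 0, every B > 0 and every multi-index κ ∈ ℕ^d, the Leibniz-type sum over multi-indices μ ≤ κ satisfies ∑_{μ ≤ κ} (∏_{i=1}^d C(κ_i, μ_i)) · B^{|μ|} μ^{βμ} · B^{|κ−μ|} (κ−μ)^{β(κ−μ)} ≤ (2B)^{|κ|} κ^{βκ}, where C(n,k) denotes the binomial coefficient and the convention 0^0 = 1 is used. (The combinatorial inequality underlying estimate (6.5).) -/
import Mathlib


/-!
STATEMENT 12 (the combinatorial inequality underlying estimate (6.5)).
For every `β ≥ 0`, `B > 0` and multi-index `κ ∈ ℕ^d`,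
`∑_{μ ≤ κ} (∏ i, C(κ i, μ i)) B^{|μ|} μ^{βμ} B^{|κ−μ|} (κ−μ)^{β(κ−μ)}
  ≤ (2B)^{|κ|} κ^{βκ}`,
with `κ^{βκ} = ∏ i, (κ i)^{β κ i}` and the convention `0^0 = 1`.
-/

theorem leibniz_multiindex_sum_le
    (d : ℕ) (hd : 1 ≤ d) (β B : ℝ) (hβ : 0 ≤ β) (hB : 0 < B) (κ : Fin d → ℕ) :
    ∑ μ ∈ Finset.Iic κ,
        ((∏ i, (κ i).choose (μ i) : ℕ) : ℝ) *
          (B ^ (∑ i, μ i) * ∏ i, ((μ i : ℝ) ^ (β * (μ i : ℝ)))) *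
          (B ^ (∑ i, (κ i - μ i)) *
            ∏ i, (((κ i - μ i : ℕ) : ℝ) ^ (β * ((κ i - μ i : ℕ) : ℝ)))) ≤
      (2 * B) ^ (∑ i, κ i) * ∏ i, ((κ i : ℝ) ^ (β * (κ i : ℝ))) := by
  set P : ℝ := ∏ i, ((κ i : ℝ) ^ (β * (κ i : ℝ))) with hP
  have hPnonneg : 0 ≤ P := Finset.prod_nonneg fun i _ =>
    Real.rpow_nonneg (Nat.cast_nonneg _) _
  -- termwise bound
  have key : ∀ μ ∈ Finset.Iic κ,
      ((∏ i, (κ i).choose (μ i) : ℕ) : ℝ) *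
          (B ^ (∑ i, μ i) * ∏ i, ((μ i : ℝ) ^ (β * (μ i : ℝ)))) *
          (B ^ (∑ i, (κ i - μ i)) *
            ∏ i, (((κ i - μ i : ℕ) : ℝ) ^ (β * ((κ i - μ i : ℕ) : ℝ)))) ≤
      ((∏ i, (κ i).choose (μ i) : ℕ) : ℝ) * (B ^ (∑ i, κ i) * P) := by
    intro μ hμ
    rw [Finset.mem_Iic] at hμ
    have hsum : (∑ i, μ i) + (∑ i, (κ i - μ i)) = ∑ i, κ i := by
      rw [← Finset.sum_add_distrib]
      exact Finset.sum_congr rfl fun i _ => Nat.add_sub_cancel' (hμ i)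
    have hprod : (∏ i, ((μ i : ℝ) ^ (β * (μ i : ℝ)))) *
        (∏ i, (((κ i - μ i : ℕ) : ℝ) ^ (β * ((κ i - μ i : ℕ) : ℝ)))) ≤ P := by
      rw [hP, ← Finset.prod_mul_distrib]
      apply Finset.prod_le_prod
      · intro i _
        exact mul_nonneg (Real.rpow_nonneg (Nat.cast_nonneg _) _)
          (Real.rpow_nonneg (Nat.cast_nonneg _) _)
      · intro i _
        have h1 : ((μ i : ℝ)) ^ (β * (μ i : ℝ)) ≤ ((κ i : ℝ)) ^ (β * (μ i : ℝ)) :=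
          Real.rpow_le_rpow (Nat.cast_nonneg _) (Nat.cast_le.mpr (hμ i))
            (mul_nonneg hβ (Nat.cast_nonneg _))
        have h2 : (((κ i - μ i : ℕ) : ℝ)) ^ (β * ((κ i - μ i : ℕ) : ℝ)) ≤
            ((κ i : ℝ)) ^ (β * ((κ i - μ i : ℕ) : ℝ)) :=
          Real.rpow_le_rpow (Nat.cast_nonneg _) (Nat.cast_le.mpr (Nat.sub_le _ _))
            (mul_nonneg hβ (Nat.cast_nonneg _))
        calc ((μ i : ℝ)) ^ (β * (μ i : ℝ)) *
              (((κ i - μ i : ℕ) : ℝ)) ^ (β * ((κ i - μ i : ℕ) : ℝ))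
            ≤ ((κ i : ℝ)) ^ (β * (μ i : ℝ)) * ((κ i : ℝ)) ^ (β * ((κ i - μ i : ℕ) : ℝ)) :=
              mul_le_mul h1 h2 (Real.rpow_nonneg (Nat.cast_nonneg _) _)
                (Real.rpow_nonneg (Nat.cast_nonneg _) _)
          _ = ((κ i : ℝ)) ^ (β * (μ i : ℝ) + β * ((κ i - μ i : ℕ) : ℝ)) :=
              (Real.rpow_add_of_nonneg (Nat.cast_nonneg _)
                (mul_nonneg hβ (Nat.cast_nonneg _)) (mul_nonneg hβ (Nat.cast_nonneg _))).symm
          _ = ((κ i : ℝ)) ^ (β * (κ i : ℝ)) := by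
              congr 1
              rw [← mul_add]
              congr 1
              push_cast [Nat.cast_sub (hμ i)]
              ring
    have hBk : B ^ (∑ i, μ i) * B ^ (∑ i, (κ i - μ i)) = B ^ (∑ i, κ i) := by
      rw [← pow_add, hsum]
    have hc : (0 : ℝ) ≤ ((∏ i, (κ i).choose (μ i) : ℕ) : ℝ) := Nat.cast_nonneg _
    calc ((∏ i, (κ i).choose (μ i) : ℕ) : ℝ) *
          (B ^ (∑ i, μ i) * ∏ i, ((μ i : ℝ) ^ (β * (μ i : ℝ)))) *
          (B ^ (∑ i, (κ i - μ i)) *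
            ∏ i, (((κ i - μ i : ℕ) : ℝ) ^ (β * ((κ i - μ i : ℕ) : ℝ)))) =
        ((∏ i, (κ i).choose (μ i) : ℕ) : ℝ) * (B ^ (∑ i, κ i) *
          ((∏ i, ((μ i : ℝ) ^ (β * (μ i : ℝ)))) *
            (∏ i, (((κ i - μ i : ℕ) : ℝ) ^ (β * ((κ i - μ i : ℕ) : ℝ)))))) := by
          rw [← hBk]; ring
      _ ≤ ((∏ i, (κ i).choose (μ i) : ℕ) : ℝ) * (B ^ (∑ i, κ i) * P) := by
          apply mul_le_mul_of_nonneg_left _ hc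
          exact mul_le_mul_of_nonneg_left hprod (pow_nonneg hB.le _)
  calc ∑ μ ∈ Finset.Iic κ,
        ((∏ i, (κ i).choose (μ i) : ℕ) : ℝ) *
          (B ^ (∑ i, μ i) * ∏ i, ((μ i : ℝ) ^ (β * (μ i : ℝ)))) *
          (B ^ (∑ i, (κ i - μ i)) *
            ∏ i, (((κ i - μ i : ℕ) : ℝ) ^ (β * ((κ i - μ i : ℕ) : ℝ))))
      ≤ ∑ μ ∈ Finset.Iic κ,
          ((∏ i, (κ i).choose (μ i) : ℕ) : ℝ) * (B ^ (∑ i, κ i) * P) :=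
        Finset.sum_le_sum key
    _ = (∑ μ ∈ Finset.Iic κ, ((∏ i, (κ i).choose (μ i) : ℕ) : ℝ)) *
          (B ^ (∑ i, κ i) * P) := by rw [← Finset.sum_mul]
    _ = (2 * B) ^ (∑ i, κ i) * P := by
        have hIic : Finset.Iic κ = Fintype.piFinset fun i => Finset.Iic (κ i) := by
          ext μ; simp [Fintype.mem_piFinset, Pi.le_def]
        have : ∑ μ ∈ Finset.Iic κ, ((∏ i, (κ i).choose (μ i) : ℕ) : ℝ) =
            (2 : ℝ) ^ (∑ i, κ i) := by
          rw [hIic]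
          push_cast
          rw [← Finset.prod_univ_sum (κ := fun _ : Fin d => ℕ)
            (fun i => Finset.Iic (κ i)) (fun i x => ((κ i).choose x : ℝ))]
          rw [← Finset.prod_pow_eq_pow_sum]
          apply Finset.prod_congr rfl
          intro i _
          have hr : Finset.Iic (κ i) = Finset.range (κ i + 1) := by
            ext x; simp [Nat.lt_succ_iff]
          rw [hr]
          rw [← Nat.cast_sum, Nat.sum_range_choose]
          push_cast
          ring
        rw [this, mul_pow]; ring
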